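/- For all integers m, m' with 0 ≤ m, m' ≤ |n|−1 and all Schwartz functions g, h : ℝ → ℂ, one has ∫_{[0,1]²} Θ_m(g)(x¹,x²) · conj(Θ_{m'}(h)(x¹,x²)) dx¹ dx² = δ_{m,m'} · ∫_ℝ g(t) · conj(h(t)) dt. In particular each Θ_m preserves the L² inner product (norm over [0,1]² on the target, over ℝ on the source) and is injective on Schwartz functions, and Θ_m(g), Θ_{m'}(h) are orthogonal in L²([0,1]²) when m ≠ m'. -/

import Mathlib

open Real Complex MeasureTheory

/-- `Θ_m(g)(x¹,x²) = Σ_{k∈ℤ} e^{2πi(nk+m)x¹} g(x²+k)`. -/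
noncomputable def Theta (n m : ℤ) (g : SchwartzMap ℝ ℂ) (x1 x2 : ℝ) : ℂ :=
  ∑' k : ℤ, Complex.exp (2 * Real.pi * Complex.I * ((n : ℂ) * (k : ℂ) + (m : ℂ)) * (x1 : ℂ))
    * g (x2 + (k : ℝ))

/-- Orthogonality: for `0 ≤ m, m' ≤ |n|−1`,
`∫_{[0,1]²} Θ_m(g) conj(Θ_{m'}(h)) = δ_{m,m'} ∫_ℝ g conj(h)`; in particular each `Θ_m`
preserves the `L²` inner product and is injective on Schwartz functions. -/
noncomputable def E' (q : ℤ) (x : ℝ) : ℂ := Complex.exp (2 * Real.pi * Complex.I * (q : ℂ) * (x : ℂ))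

lemma E'_eq (q : ℤ) (x : ℝ) : E' q x = Complex.exp (((2 * Real.pi * q * x : ℝ) : ℂ) * Complex.I) := by
  unfold E'; push_cast; ring_nf

lemma norm_E' (q : ℤ) (x : ℝ) : ‖E' q x‖ = 1 := by
  rw [E'_eq]; exact Complex.norm_exp_ofReal_mul_I _

lemma continuous_E' (q : ℤ) : Continuous (E' q) := by
  unfold E'; exact Complex.continuous_exp.comp (by fun_prop)

lemma E'_mul_conj (q q' : ℤ) (x : ℝ) :
    E' q x * (starRingEnd ℂ) (E' q' x) = E' (q - q') x := by
  unfold E'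
  rw [← Complex.exp_conj, ← Complex.exp_add]
  congr 1
  simp only [map_mul, map_ofNat, Complex.conj_I, Complex.conj_ofReal, map_intCast]
  push_cast
  ring

lemma integral_E' (j : ℤ) :
    ∫ x in Set.Icc (0:ℝ) 1, E' j x = if j = 0 then 1 else 0 := by
  rw [integral_Icc_eq_integral_Ioc, ← intervalIntegral.integral_of_le zero_le_one]
  rcases eq_or_ne j 0 with rfl | hj
  · simp [E']
  · have hc : (2 * Real.pi * Complex.I * (j:ℂ)) ≠ 0 := by
      simp [Real.pi_ne_zero, Complex.I_ne_zero, hj]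
    rw [if_neg hj]
    have : ∀ x : ℝ, E' j x = Complex.exp ((2 * Real.pi * Complex.I * (j:ℂ)) * (x:ℂ)) := fun x => rfl
    simp_rw [this]
    rw [integral_exp_mul_complex hc]
    have h1 : Complex.exp (2 * Real.pi * Complex.I * (j:ℂ) * (1:ℝ)) = 1 := by
      rw [show (2 * Real.pi * Complex.I * (j:ℂ) * ((1:ℝ):ℂ)) = (j:ℂ) * (2 * Real.pi * Complex.I) by push_cast; ring]
      exact_mod_cast Complex.exp_int_mul_two_pi_mul_I j
    rw [h1]
    simp

lemma summable_inv_one_add_abs_sq : Summable (fun k : ℤ => ((1 + |(k:ℝ)|)^2)⁻¹) := by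
  have hb : Summable (fun n : ℕ => 1/((n:ℝ))^2) := summable_one_div_nat_pow.mpr one_lt_two
  have hb1 : Summable (fun n : ℕ => 1/(((n:ℝ)+1))^2) := by
    have := (summable_nat_add_iff 1).mpr hb
    apply this.congr; intro n; push_cast; ring
  have hnat : Summable (fun n : ℕ => ((1 + (n:ℝ))^2)⁻¹) := by
    apply hb1.congr; intro n; rw [one_div]; ring_nf
  apply Summable.of_nat_of_neg
  · apply hnat.congr; intro n; norm_num
  · apply hnat.congr; intro n; push_cast; simp [abs_of_nonneg (Nat.cast_nonneg (α := ℝ) n)]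

lemma schwartz_decay_bound (g : SchwartzMap ℝ ℂ) :
    ∃ C : ℝ, 0 ≤ C ∧ ∀ x ∈ Set.Icc (0:ℝ) 1, ∀ k : ℤ, ‖g (x + k)‖ ≤ C * ((1 + |(k:ℝ)|)^2)⁻¹ := by
  obtain ⟨C0, hC0p, hC0⟩ := g.decay 0 0
  obtain ⟨C1, hC1p, hC1⟩ := g.decay 1 0
  obtain ⟨C2, hC2p, hC2⟩ := g.decay 2 0
  simp only [norm_iteratedFDeriv_zero, pow_zero, pow_one, one_mul] at hC0 hC1 hC2
  refine ⟨4*C0 + 4*C1 + C2, by positivity, fun x hx k => ?_⟩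
  obtain ⟨hx0, hx1⟩ := hx
  set y := x + (k:ℝ) with hy
  have hknorm : (1 + |(k:ℝ)|) ≤ 2 + ‖y‖ := by
    rw [Real.norm_eq_abs]
    have : |(k:ℝ)| ≤ |y| + 1 := by
      have hk : (k:ℝ) = y - x := by rw [hy]; ring
      rw [hk]
      calc |y - x| ≤ |y| + |x| := abs_sub _ _
        _ ≤ |y| + 1 := by rw [_root_.abs_of_nonneg hx0]; linarith
    linarith
  have hpos : (0:ℝ) < (1 + |(k:ℝ)|)^2 := by positivity
  rw [← mul_le_mul_iff_right₀ hpos]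
  calc (1 + |(k:ℝ)|)^2 * ‖g y‖ ≤ (2 + ‖y‖)^2 * ‖g y‖ := by
        apply mul_le_mul_of_nonneg_right _ (norm_nonneg _)
        apply pow_le_pow_left₀ (by positivity) hknorm
    _ = 4 * ‖g y‖ + 4 * (‖y‖ * ‖g y‖) + ‖y‖^2 * ‖g y‖ := by ring
    _ ≤ 4*C0 + 4*C1 + C2 := by
        have := hC0 y; have := hC1 y; have := hC2 y
        nlinarith [norm_nonneg (g y), norm_nonneg y]
    _ = (1 + |(k:ℝ)|)^2 * ((4*C0 + 4*C1 + C2) * ((1 + |(k:ℝ)|)^2)⁻¹) := by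
        field_simp

lemma schwartz_sup_bound (g : SchwartzMap ℝ ℂ) : ∃ C : ℝ, 0 ≤ C ∧ ∀ y : ℝ, ‖g y‖ ≤ C := by
  obtain ⟨C0, hC0p, hC0⟩ := g.decay 0 0
  exact ⟨C0, hC0p.le, fun y => by simpa using hC0 y⟩

lemma summable_norm_schwartz (g : SchwartzMap ℝ ℂ) {x : ℝ} (hx : x ∈ Set.Icc (0:ℝ) 1) :
    Summable fun k : ℤ => ‖g (x + (k:ℝ))‖ := by
  obtain ⟨C, hC0, hC⟩ := schwartz_decay_bound g
  exact Summable.of_nonneg_of_le (fun k => norm_nonneg _) (fun k => hC x hx k)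
    (summable_inv_one_add_abs_sq.mul_left C)

lemma delta_cond {n : ℤ} (_hn : n ≠ 0) {m m' : ℤ} (hm0 : 0 ≤ m) (hm1 : m ≤ |n| - 1)
    (hm0' : 0 ≤ m') (hm1' : m' ≤ |n| - 1) (k k' : ℤ) :
    n * k + m - (n * k' + m') = 0 ↔ (k = k' ∧ m = m') := by
  constructor
  · intro hc
    have hd : n * (k - k') = m' - m := by linear_combination hc
    by_cases hkk : k = k'
    · subst hkk
      simp only [sub_self, mul_zero] at hd
      exact ⟨rfl, by omega⟩
    · exfalso
      have h1 : (1:ℤ) ≤ |k - k'| := Int.one_le_abs (sub_ne_zero.mpr hkk)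
      have h2 : |n| ≤ |n| * |k - k'| := le_mul_of_one_le_right (abs_nonneg n) h1
      have h3 : |n * (k - k')| = |n| * |k - k'| := abs_mul n (k - k')
      have h4 : |m' - m| ≤ |n| - 1 := abs_le.mpr ⟨by linarith, by linarith⟩
      rw [hd] at h3
      linarith
  · rintro ⟨rfl, rfl⟩; ring

lemma Theta_eq (n m : ℤ) (g : SchwartzMap ℝ ℂ) (x1 x2 : ℝ) :
    Theta n m g x1 x2 = ∑' k : ℤ, E' (n * k + m) x1 * g (x2 + (k:ℝ)) := by
  unfold Theta E'; congr 1; funext k; push_cast; ring_nf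

lemma theta_continuousOn (n m : ℤ) (g : SchwartzMap ℝ ℂ) :
    ContinuousOn (fun p : ℝ × ℝ => Theta n m g p.1 p.2)
      (Set.Icc (0:ℝ) 1 ×ˢ Set.Icc (0:ℝ) 1) := by
  obtain ⟨C, hC0, hC⟩ := schwartz_decay_bound g
  have heq : (fun p : ℝ × ℝ => Theta n m g p.1 p.2)
      = fun p : ℝ × ℝ => ∑' k : ℤ, E' (n*k+m) p.1 * g (p.2 + (k:ℝ)) := by
    funext p; exact Theta_eq n m g p.1 p.2
  rw [heq]
  apply continuousOn_tsum (u := fun k : ℤ => C * ((1 + |(k:ℝ)|)^2)⁻¹)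
  · intro k
    apply Continuous.continuousOn
    exact ((continuous_E' (n*k+m)).comp continuous_fst).mul
      (g.continuous.comp (continuous_snd.add continuous_const))
  · exact summable_inv_one_add_abs_sq.mul_left C
  · rintro k p ⟨hp1, hp2⟩
    rw [norm_mul, norm_E', one_mul]
    exact hC p.2 hp2 k

set_option maxHeartbeats 2000000 in
lemma theta_ip (n : ℤ) (hn : n ≠ 0) (m m' : ℤ)
    (hm0 : 0 ≤ m) (hm1 : m ≤ |n| - 1) (hm0' : 0 ≤ m') (hm1' : m' ≤ |n| - 1)
    (g h : SchwartzMap ℝ ℂ) :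
    (∫ x in Set.Icc ((0 : ℝ), (0 : ℝ)) (1, 1),
        Theta n m g x.1 x.2 * (starRingEnd ℂ) (Theta n m' h x.1 x.2))
      = (if m = m' then 1 else 0) * ∫ t : ℝ, g t * (starRingEnd ℂ) (h t) := by
  obtain ⟨Cg, hCg0, hCg⟩ := schwartz_decay_bound g
  obtain ⟨Ch, hCh0, hCh⟩ := schwartz_decay_bound h
  set S : Set ℝ := Set.Icc 0 1 with hSdef
  have hSmeas : MeasurableSet S := measurableSet_Icc
  have hSvol : (volume S).toReal = 1 := by simp [hSdef]
  have hSfin : volume S < ⊤ := by rw [hSdef, Real.volume_Icc]; exact ENNReal.ofReal_lt_top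
  set B : ℤ × ℤ → ℝ := fun p => (Cg * ((1+|(p.1:ℝ)|)^2)⁻¹) * (Ch * ((1+|(p.2:ℝ)|)^2)⁻¹) with hB
  set c : ℤ × ℤ → ℂ :=
    fun p => ∫ x2 in S, g (x2 + (p.1:ℝ)) * (starRingEnd ℂ) (h (x2 + (p.2:ℝ))) with hc
  have hb_sum : Summable B :=
    Summable.mul_of_nonneg (summable_inv_one_add_abs_sq.mul_left Cg)
      (summable_inv_one_add_abs_sq.mul_left Ch)
      (fun k => by positivity) (fun k => by positivity)
  have hprod_bound : ∀ p : ℤ×ℤ, ∀ x2 ∈ S, ‖g (x2+(p.1:ℝ)) * (starRingEnd ℂ) (h (x2+(p.2:ℝ)))‖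
      ≤ B p := by
    intro p x2 hx2
    rw [norm_mul, RCLike.norm_conj]
    exact mul_le_mul (hCg x2 hx2 p.1) (hCh x2 hx2 p.2) (norm_nonneg _) (by positivity)
  have hbase_cont : ∀ p : ℤ×ℤ, Continuous
      (fun x2 : ℝ => g (x2 + (p.1:ℝ)) * (starRingEnd ℂ) (h (x2 + (p.2:ℝ)))) := by
    intro p
    exact (g.continuous.comp (continuous_id.add continuous_const)).mul
      (Complex.continuous_conj.comp (h.continuous.comp (continuous_id.add continuous_const)))
  have hbase_int : ∀ p : ℤ×ℤ, IntegrableOn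
      (fun x2 : ℝ => g (x2 + (p.1:ℝ)) * (starRingEnd ℂ) (h (x2 + (p.2:ℝ)))) S volume :=
    fun p => ContinuousOn.integrableOn_compact isCompact_Icc (hbase_cont p).continuousOn
  have hcbound : ∀ p : ℤ×ℤ, ‖c p‖ ≤ B p := by
    intro p
    calc ‖c p‖ ≤ B p * (volume S).toReal :=
          norm_setIntegral_le_of_norm_le_const hSfin (fun x2 hx2 => hprod_bound p x2 hx2)
      _ = B p := by rw [hSvol, mul_one]
  -- Step A : inner integral over x2 for each fixed x1
  have stepA : ∀ x1 : ℝ,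
      (∫ x2 in S, Theta n m g x1 x2 * (starRingEnd ℂ) (Theta n m' h x1 x2))
      = ∑' p : ℤ×ℤ, E' (n*p.1+m - (n*p.2+m')) x1 * c p := by
    intro x1
    have hEg : Set.EqOn (fun x2 => Theta n m g x1 x2 * (starRingEnd ℂ) (Theta n m' h x1 x2))
        (fun x2 => ∑' p : ℤ×ℤ, E' (n*p.1+m - (n*p.2+m')) x1
          * (g (x2+(p.1:ℝ)) * (starRingEnd ℂ) (h (x2+(p.2:ℝ))))) S := by
      intro x2 hx2
      have hsum1 : Summable fun k : ℤ => ‖E' (n*k+m) x1 * g (x2+(k:ℝ))‖ := by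
        apply (summable_norm_schwartz g hx2).congr
        intro k; rw [norm_mul, norm_E', one_mul]
      have hsum2 : Summable fun k : ℤ =>
          ‖(starRingEnd ℂ) (E' (n*k+m') x1 * h (x2+(k:ℝ)))‖ := by
        apply (summable_norm_schwartz h hx2).congr
        intro k; rw [RCLike.norm_conj, norm_mul, norm_E', one_mul]
      show Theta n m g x1 x2 * (starRingEnd ℂ) (Theta n m' h x1 x2) = _
      rw [Theta_eq, Theta_eq]
      rw [show (starRingEnd ℂ) (∑' k:ℤ, E' (n*k+m') x1 * h (x2+(k:ℝ)))
          = ∑' k:ℤ, (starRingEnd ℂ) (E' (n*k+m') x1 * h (x2+(k:ℝ))) from tsum_star]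
      rw [tsum_mul_tsum_of_summable_norm hsum1 hsum2]
      congr 1; funext p
      rw [map_mul]
      rw [show E' (n*p.1+m) x1 * g (x2+(p.1:ℝ))
            * ((starRingEnd ℂ) (E' (n*p.2+m') x1) * (starRingEnd ℂ) (h (x2+(p.2:ℝ))))
          = (E' (n*p.1+m) x1 * (starRingEnd ℂ) (E' (n*p.2+m') x1))
            * (g (x2+(p.1:ℝ)) * (starRingEnd ℂ) (h (x2+(p.2:ℝ)))) from by ring]
      rw [E'_mul_conj]
    rw [setIntegral_congr_fun hSmeas hEg]
    have hint : ∀ p : ℤ×ℤ, Integrable (fun x2 => E' (n*p.1+m - (n*p.2+m')) x1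
        * (g (x2+(p.1:ℝ)) * (starRingEnd ℂ) (h (x2+(p.2:ℝ))))) (volume.restrict S) :=
      fun p => ((hbase_int p).const_mul _)
    have hsummable : Summable (fun p : ℤ×ℤ => ∫ x2 in S, ‖E' (n*p.1+m - (n*p.2+m')) x1
        * (g (x2+(p.1:ℝ)) * (starRingEnd ℂ) (h (x2+(p.2:ℝ))))‖) := by
      apply Summable.of_nonneg_of_le (fun p => integral_nonneg (fun x2 => norm_nonneg _))
        (fun p => ?_) hb_sum
      calc (∫ x2 in S, ‖E' (n*p.1+m - (n*p.2+m')) x1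
            * (g (x2+(p.1:ℝ)) * (starRingEnd ℂ) (h (x2+(p.2:ℝ))))‖)
          ≤ ∫ _x2 in S, B p := by
            apply setIntegral_mono_on ((hint p).norm) (integrableOn_const hSfin.ne)
              hSmeas
            intro x2 hx2
            rw [norm_mul, norm_E', one_mul]
            exact hprod_bound p x2 hx2
        _ = B p := by rw [setIntegral_const, measureReal_def, hSvol, one_smul]
    rw [← integral_tsum_of_summable_integral_norm hint hsummable]
    congr 1; funext p
    rw [integral_const_mul]
  -- Step B : outer integral over x1
  have hB2 : (∫ x1 in S, ∑' p : ℤ×ℤ, E' (n*p.1+m - (n*p.2+m')) x1 * c p)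
      = ∑' p : ℤ×ℤ, (if n*p.1+m - (n*p.2+m') = 0 then (1:ℂ) else 0) * c p := by
    have hint : ∀ p : ℤ×ℤ, Integrable (fun x1 => E' (n*p.1+m - (n*p.2+m')) x1 * c p)
        (volume.restrict S) :=
      fun p => (ContinuousOn.integrableOn_compact isCompact_Icc
        (continuous_E' _).continuousOn).mul_const _
    have hsummable : Summable (fun p : ℤ×ℤ =>
        ∫ x1 in S, ‖E' (n*p.1+m - (n*p.2+m')) x1 * c p‖) := by
      apply Summable.of_nonneg_of_le (fun p => integral_nonneg (fun x1 => norm_nonneg _))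
        (fun p => ?_) hb_sum
      have : (fun x1 : ℝ => ‖E' (n*p.1+m - (n*p.2+m')) x1 * c p‖) = fun _ => ‖c p‖ := by
        funext x1; rw [norm_mul, norm_E', one_mul]
      rw [this, setIntegral_const, measureReal_def, hSvol, one_smul]
      exact hcbound p
    rw [← integral_tsum_of_summable_integral_norm hint hsummable]
    congr 1; funext p
    rw [integral_mul_const, integral_E']
  -- Fubini
  have hIntSq : IntegrableOn
      (fun x : ℝ×ℝ => Theta n m g x.1 x.2 * (starRingEnd ℂ) (Theta n m' h x.1 x.2))
      (S ×ˢ S) (volume.prod volume) := by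
    apply ContinuousOn.integrableOn_compact (isCompact_Icc.prod isCompact_Icc)
    exact (theta_continuousOn n m g).mul
      (Complex.continuous_conj.comp_continuousOn (theta_continuousOn n m' h))
  have hfub : (∫ x in Set.Icc ((0 : ℝ), (0 : ℝ)) (1, 1),
        Theta n m g x.1 x.2 * (starRingEnd ℂ) (Theta n m' h x.1 x.2))
      = ∫ x1 in S, ∫ x2 in S, Theta n m g x1 x2 * (starRingEnd ℂ) (Theta n m' h x1 x2) := by
    have h1 : Set.Icc ((0:ℝ),(0:ℝ)) ((1:ℝ),(1:ℝ)) = S ×ˢ S := by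
      rw [Set.Icc_prod_eq]
    rw [h1, Measure.volume_eq_prod]
    exact setIntegral_prod _ hIntSq
  rw [hfub, setIntegral_congr_fun hSmeas (fun x1 _ => stepA x1), hB2]
  by_cases hmm' : m = m'
  · subst hmm'
    rw [if_pos rfl, one_mul]
    have hterm : ∀ p : ℤ×ℤ, (if n*p.1+m - (n*p.2+m) = 0 then (1:ℂ) else 0) * c p
        = if p.1 = p.2 then c p else 0 := by
      intro p
      by_cases hp : p.1 = p.2
      · rw [if_pos (by rw [hp]; ring), if_pos hp, one_mul]
      · rw [if_neg (fun hzero =>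
          hp ((delta_cond hn hm0 hm1 hm0 hm1 p.1 p.2).mp hzero).1), if_neg hp, zero_mul]
    rw [tsum_congr hterm]
    have hdiag : ∑' p : ℤ×ℤ, (if p.1 = p.2 then c p else 0) = ∑' k : ℤ, c (k,k) := by
      apply tsum_eq_tsum_of_ne_zero_bij (fun k => ((k.1 : ℤ), (k.1 : ℤ)))
      · intro a b hab
        exact Subtype.ext (congrArg Prod.fst hab)
      · rintro ⟨p1, p2⟩ hp
        simp only [Function.mem_support] at hp
        by_cases hpp : p1 = p2
        · subst hpp
          refine ⟨⟨p1, ?_⟩, rfl⟩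
          simpa using hp
        · simp only [hpp, if_neg] at hp
          simp at hp
      · intro x
        simp
    rw [hdiag]
    have hF_int : Integrable (fun t : ℝ => g t * (starRingEnd ℂ) (h t)) := by
      obtain ⟨Cs, hCs0, hCs⟩ := schwartz_sup_bound g
      apply Integrable.bdd_mul ?_ g.continuous.aestronglyMeasurable (Filter.Eventually.of_forall hCs)
      refine (h.integrable (μ := volume)).mono ?_ ?_
      · exact (Complex.continuous_conj.comp h.continuous).aestronglyMeasurable
      · filter_upwards with t
        rw [RCLike.norm_conj]
    have hHas := hF_int.hasSum_intervalIntegral_comp_add_int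
    have hckk : ∀ k : ℤ, c (k, k)
        = ∫ x in (0:ℝ)..1, g (x + (k:ℝ)) * (starRingEnd ℂ) (h (x + (k:ℝ))) := by
      intro k
      rw [intervalIntegral.integral_of_le zero_le_one, ← integral_Icc_eq_integral_Ioc]
    calc ∑' k : ℤ, c (k,k)
        = ∑' k : ℤ, ∫ x in (0:ℝ)..1,
            (fun t => g t * (starRingEnd ℂ) (h t)) (x + (k:ℝ)) := tsum_congr hckk
      _ = ∫ t : ℝ, g t * (starRingEnd ℂ) (h t) := hHas.tsum_eq
  · rw [if_neg hmm', zero_mul]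
    have hterm : ∀ p : ℤ×ℤ, (if n*p.1+m - (n*p.2+m') = 0 then (1:ℂ) else 0) * c p = 0 := by
      intro p
      rw [if_neg (fun hzero =>
        hmm' ((delta_cond hn hm0 hm1 hm0' hm1' p.1 p.2).mp hzero).2), zero_mul]
    rw [tsum_congr hterm, tsum_zero]

lemma summable_norm_schwartz' (g : SchwartzMap ℝ ℂ) (x : ℝ) :
    Summable fun k : ℤ => ‖g (x + (k:ℝ))‖ := by
  have h1 := summable_norm_schwartz g (x := Int.fract x)
    ⟨Int.fract_nonneg x, (Int.fract_lt_one x).le⟩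
  have h2 := h1.comp_injective (add_left_injective (⌊x⌋ : ℤ))
  apply h2.congr
  intro k
  have harg : Int.fract x + ((k + ⌊x⌋ : ℤ):ℝ) = x + (k:ℝ) := by
    push_cast
    have := Int.floor_add_fract x
    linarith
  simp only [Function.comp_apply]
  rw [harg]

lemma summable_term (n m : ℤ) (g : SchwartzMap ℝ ℂ) (x1 x2 : ℝ) :
    Summable fun k : ℤ => E' (n*k+m) x1 * g (x2+(k:ℝ)) := by
  apply Summable.of_norm
  apply (summable_norm_schwartz' g x2).congr
  intro k; rw [norm_mul, norm_E', one_mul]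

lemma theta_sub (n m : ℤ) (g h : SchwartzMap ℝ ℂ) (x1 x2 : ℝ) :
    Theta n m (g - h) x1 x2 = Theta n m g x1 x2 - Theta n m h x1 x2 := by
  rw [Theta_eq, Theta_eq, Theta_eq,
    ← Summable.tsum_sub (summable_term n m g x1 x2) (summable_term n m h x1 x2)]
  congr 1; funext k
  rw [SchwartzMap.sub_apply]; ring

theorem theta_orthogonality (n : ℤ) (hn : n ≠ 0) (m m' : ℤ)
    (hm0 : 0 ≤ m) (hm1 : m ≤ |n| - 1) (hm0' : 0 ≤ m') (hm1' : m' ≤ |n| - 1)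
    (g h : SchwartzMap ℝ ℂ) :
    (∫ x in Set.Icc ((0 : ℝ), (0 : ℝ)) (1, 1),
        Theta n m g x.1 x.2 * (starRingEnd ℂ) (Theta n m' h x.1 x.2))
      = (if m = m' then 1 else 0) * ∫ t : ℝ, g t * (starRingEnd ℂ) (h t) ∧
    Function.Injective (fun g₀ : SchwartzMap ℝ ℂ => Theta n m g₀) := by
  constructor
  · exact theta_ip n hn m m' hm0 hm1 hm0' hm1' g h
  · intro g₀ h₀ hgh
    simp only at hgh
    set f := g₀ - h₀ with hf
    have hf0 : ∀ x1 x2 : ℝ, Theta n m f x1 x2 = 0 := by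
      intro x1 x2
      rw [hf, theta_sub n m g₀ h₀ x1 x2, congrFun (congrFun hgh x1) x2, sub_self]
    have hkey := theta_ip n hn m m hm0 hm1 hm0 hm1 f f
    rw [if_pos rfl, one_mul] at hkey
    have hzero : (∫ x in Set.Icc ((0:ℝ),(0:ℝ)) (1,1),
        Theta n m f x.1 x.2 * (starRingEnd ℂ) (Theta n m f x.1 x.2)) = 0 := by
      have heq : (fun x : ℝ×ℝ => Theta n m f x.1 x.2 * (starRingEnd ℂ) (Theta n m f x.1 x.2))
          = fun _ => (0:ℂ) := by
        funext x; rw [hf0]; ring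
      rw [heq]
      simp
    rw [hzero] at hkey
    -- now : 0 = ∫ t, f t * conj (f t)
    have hF_int : Integrable (fun t : ℝ => f t * (starRingEnd ℂ) (f t)) := by
      obtain ⟨Cs, hCs0, hCs⟩ := schwartz_sup_bound f
      apply Integrable.bdd_mul ?_ f.continuous.aestronglyMeasurable (Filter.Eventually.of_forall hCs)
      refine (f.integrable (μ := volume)).mono ?_ ?_
      · exact (Complex.continuous_conj.comp f.continuous).aestronglyMeasurable
      · filter_upwards with t
        rw [RCLike.norm_conj]
    have hre : (fun t : ℝ => Complex.normSq (f t))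
        = fun t => RCLike.re (f t * (starRingEnd ℂ) (f t)) := by
      funext t
      rw [Complex.mul_conj]
      simp
    have hint : Integrable (fun t : ℝ => Complex.normSq (f t)) := by
      rw [hre]; exact hF_int.re
    have hintzero : (∫ t : ℝ, Complex.normSq (f t)) = 0 := by
      rw [hre, integral_re hF_int, ← hkey]
      simp
    have hae := (integral_eq_zero_iff_of_nonneg (fun t => Complex.normSq_nonneg _) hint).mp hintzero
    have hcont : Continuous (fun t : ℝ => Complex.normSq (f t)) :=
      Complex.continuous_normSq.comp f.continuous
    have hall : (fun t : ℝ => Complex.normSq (f t)) = fun _ => 0 :=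
      (Continuous.ae_eq_iff_eq volume hcont continuous_const).mp hae
    have : ∀ t : ℝ, f t = 0 := by
      intro t
      have := congrFun hall t
      exact Complex.normSq_eq_zero.mp this
    have hgh' : g₀ = h₀ := by
      ext t
      have ht := this t
      rw [hf, SchwartzMap.sub_apply, sub_eq_zero] at ht
      exact ht
    exact hgh'
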